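/- arXiv:2410.06979 — 2 statements merged into one kernel-verified Lean document; each statement's English description precedes it below -/
import Mathlib

section
/- Let K be a field of characteristic zero, let n ≥ 2, and let L be a LAnKe over K. Then for all z_0, z_1, …, z_{n-1}, w_1, …, w_{n-1} ∈ L one has Σ_{i=1}^{n-1} (−1)^i [[z_i,w_1,…,w_{n-1}],z_0,z_1,…,ẑ_i,…,z_{n-1}] = (n−1)·[[z_0,z_1,…,z_{n-1}],w_1,…,w_{n-1}] + Σ_{i=1}^{n-1} (−1)^i Σ_{j=1}^{n-1} (−1)^{j+1} [[z_0,w_j,z_1,…,ẑ_i,…,z_{n-1}],z_i,w_1,…,ŵ_j,…,w_{n-1}], where the integer coefficient n−1 acts via the canonical map ℤ → K. -/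
/-- The tuple `(a, v₀, …, v_{n-2})` of length `n`: one element `a` prepended to the
length-`(n-1)` tuple `v`. -/
def consTup {L : Type*} {n : ℕ} (a : L) (v : Fin (n - 1) → L) : Fin n → L :=
  fun m =>
    if h0 : (m : ℕ) = 0 then a
    else v ⟨(m : ℕ) - 1, by have := m.isLt; omega⟩

/-- The tuple `(a, b, v₀, …, v̂ᵢ, …, v_{n-2})` of length `n`: two elements `a, b` followed
by the length-`(n-1)` tuple `v` with its `i`-th entry omitted. -/
def pairCons {L : Type*} {n : ℕ} (a b : L) (v : Fin (n - 1) → L) (i : Fin (n - 1)) :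
    Fin n → L :=
  fun m =>
    if h0 : (m : ℕ) = 0 then a
    else if h1 : (m : ℕ) = 1 then b
    else if (m : ℕ) - 2 < (i : ℕ) then
      v ⟨(m : ℕ) - 2, by have := m.isLt; have := i.isLt; omega⟩
    else v ⟨(m : ℕ) - 1, by have := m.isLt; omega⟩

/-- A LAnKe (Lie algebra of the `n`-th kind, or Filippov algebra) over a field `K`:
a vector space `L` with an `n`-linear bracket which is skew-symmetric and satisfies the
generalized Jacobi identity. -/
structure LAnKe (K : Type*) [Field K] (n : ℕ) (L : Type*)
    [AddCommGroup L] [Module K L] where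
  bracket : MultilinearMap K (fun _ : Fin n => L) L
  /-- `[x_1, …, x_n] = sign σ • [x_{σ(1)}, …, x_{σ(n)}]` for every permutation `σ`. -/
  skew : ∀ (x : Fin n → L) (σ : Equiv.Perm (Fin n)),
    bracket x = (Equiv.Perm.sign σ : ℤ) • bracket (x ∘ σ)
  /-- The generalized Jacobi identity:
  `[[x_1,…,x_n], y_1,…,y_{n-1}] = Σ_{i=1}^n [x_1,…,[x_i,y_1,…,y_{n-1}],…,x_n]`. -/
  jacobi : ∀ (x : Fin n → L) (y : Fin (n - 1) → L),
    bracket (consTup (bracket x) y) =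
      ∑ i : Fin n, bracket (Function.update x i (bracket (consTup (x i) y)))

section EvalLemmas

variable {L : Type*} {m : ℕ}

lemma consTup_eval_zero (a : L) (v : Fin m → L) (x : Fin (m + 1))
    (h : (x : ℕ) = 0) : consTup (n := m + 1) a v x = a := by
  simp only [consTup, h]; rfl

lemma consTup_eval_pos (a : L) (v : Fin m → L) (x : Fin (m + 1))
    (h : 0 < (x : ℕ)) :
    consTup (n := m + 1) a v x = v ⟨(x : ℕ) - 1, by have := x.isLt; omega⟩ := by
  simp only [consTup]; rw [dif_neg (by omega)]

lemma consTup_succ (a : L) (v : Fin m → L) (j : Fin m) :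
    consTup (n := m + 1) a v j.succ = v j := by
  rw [consTup_eval_pos _ _ _ (by simp)]
  exact congrArg v (Fin.ext (by simp))

lemma pairCons_eval_zero (a b : L) (v : Fin m → L) (i : Fin m) (x : Fin (m + 1))
    (h : (x : ℕ) = 0) : pairCons (n := m + 1) a b v i x = a := by
  simp only [pairCons, h]; rfl

lemma pairCons_eval_one (a b : L) (v : Fin m → L) (i : Fin m) (x : Fin (m + 1))
    (h : (x : ℕ) = 1) : pairCons (n := m + 1) a b v i x = b := by
  simp only [pairCons]; rw [dif_neg (by omega), dif_pos h]

lemma pairCons_eval_lt (a b : L) (v : Fin m → L) (i : Fin m) (x : Fin (m + 1))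
    (h2 : 2 ≤ (x : ℕ)) (h : (x : ℕ) - 2 < (i : ℕ)) :
    pairCons (n := m + 1) a b v i x
      = v ⟨(x : ℕ) - 2, by have := x.isLt; have := i.isLt; omega⟩ := by
  simp only [pairCons]; rw [dif_neg (by omega), dif_neg (by omega), if_pos h]

lemma pairCons_eval_ge (a b : L) (v : Fin m → L) (i : Fin m) (x : Fin (m + 1))
    (h2 : 2 ≤ (x : ℕ)) (h : (i : ℕ) ≤ (x : ℕ) - 2) :
    pairCons (n := m + 1) a b v i x
      = v ⟨(x : ℕ) - 1, by have := x.isLt; omega⟩ := by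
  simp only [pairCons]; rw [dif_neg (by omega), dif_neg (by omega), if_neg (by omega)]

lemma cycleRange_val (c x : Fin (m + 1)) :
    ((Fin.cycleRange c x : Fin (m + 1)) : ℕ) =
      if (x : ℕ) < (c : ℕ) then (x : ℕ) + 1
      else if (x : ℕ) = (c : ℕ) then 0 else (x : ℕ) := by
  rcases lt_trichotomy x c with h | h | h
  · have h' : (x : ℕ) < (c : ℕ) := h
    rw [Fin.cycleRange_of_lt h, if_pos h']
    exact Fin.val_add_one_of_lt (lt_of_lt_of_le h (Fin.le_last c))
  · subst h
    rw [Fin.cycleRange_self, if_neg (lt_irrefl _), if_pos rfl]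
    rfl
  · have h' : (c : ℕ) < (x : ℕ) := h
    rw [Fin.cycleRange_of_gt h, if_neg (by omega), if_neg (by omega)]

/-- The tuple `(z0, z_0, …, ẑ_i, …, z_{m-1})` of length `m`. -/
def midTup (z0 : L) (z : Fin m → L) (i : Fin m) : Fin m → L :=
  fun k =>
    if (k : ℕ) = 0 then z0
    else if (k : ℕ) - 1 < (i : ℕ) then z ⟨(k : ℕ) - 1, by have := k.isLt; omega⟩
    else z k

lemma midTup_eval_zero (z0 : L) (z : Fin m → L) (i : Fin m) (k : Fin m)
    (h : (k : ℕ) = 0) : midTup z0 z i k = z0 := by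
  simp only [midTup]; rw [if_pos h]

lemma midTup_eval_lt (z0 : L) (z : Fin m → L) (i : Fin m) (k : Fin m)
    (h0 : 0 < (k : ℕ)) (h : (k : ℕ) - 1 < (i : ℕ)) :
    midTup z0 z i k = z ⟨(k : ℕ) - 1, by have := k.isLt; omega⟩ := by
  simp only [midTup]; rw [if_neg (by omega), if_pos h]

lemma midTup_eval_ge (z0 : L) (z : Fin m → L) (i : Fin m) (k : Fin m)
    (h0 : 0 < (k : ℕ)) (h : (i : ℕ) ≤ (k : ℕ) - 1) :
    midTup z0 z i k = z k := by
  simp only [midTup]; rw [if_neg (by omega), if_neg (by omega)]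

lemma consTup_midTup (b z0 : L) (z : Fin m → L) (i : Fin m) :
    consTup (n := m + 1) b (midTup z0 z i) = pairCons (n := m + 1) b z0 z i := by
  funext x
  rcases Nat.eq_zero_or_pos (x : ℕ) with h0 | h0
  · rw [consTup_eval_zero _ _ _ h0, pairCons_eval_zero _ _ _ _ _ h0]
  · rw [consTup_eval_pos _ _ _ h0]
    rcases Nat.lt_or_ge (x : ℕ) 2 with h1 | h1
    · have hx1 : (x : ℕ) = 1 := by omega
      rw [midTup_eval_zero _ _ _ _ (by simp; omega), pairCons_eval_one _ _ _ _ _ hx1]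
    · by_cases hlt : (x : ℕ) - 2 < (i : ℕ)
      · rw [midTup_eval_lt _ _ _ _ (by simp; omega) (by simp; omega),
          pairCons_eval_lt _ _ _ _ _ h1 hlt]
        exact congrArg z (Fin.ext (by simp; omega))
      · rw [midTup_eval_ge _ _ _ _ (by simp; omega) (by simp; omega),
          pairCons_eval_ge _ _ _ _ _ h1 (by omega)]

lemma update_consTup_zero (a B : L) (v : Fin m → L) :
    Function.update (consTup (n := m + 1) a v) 0 B = consTup B v := by
  funext x
  rw [Function.update_apply]
  by_cases hx : x = 0
  · subst hx
    rw [if_pos rfl, consTup_eval_zero _ _ _ (by simp)]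
  · have hx' : 0 < (x : ℕ) := by
      rcases Nat.eq_zero_or_pos (x : ℕ) with h | h
      · exact absurd (Fin.ext (by simpa using h)) hx
      · exact h
    rw [if_neg hx, consTup_eval_pos _ _ _ hx', consTup_eval_pos _ _ _ hx']

end EvalLemmas

section BracketLemmas

variable {K : Type*} [Field K] {m : ℕ} {L : Type*} [AddCommGroup L] [Module K L]

lemma skew_eq (alg : LAnKe K (m + 1) L) {x y : Fin (m + 1) → L}
    (σ : Equiv.Perm (Fin (m + 1))) (h : x ∘ σ = y) :
    alg.bracket x = (Equiv.Perm.sign σ : ℤ) • alg.bracket y := by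
  rw [← h]; exact alg.skew x σ

lemma sign_cycleRange_succ (i : Fin m) :
    ((Equiv.Perm.sign (Fin.cycleRange (i.succ : Fin (m + 1)))) : ℤ)
      = (-1 : ℤ) ^ ((i : ℕ) + 1) := by
  rw [Fin.sign_cycleRange]
  simp [Fin.val_succ]

lemma map_update_zsmul (f : MultilinearMap K (fun _ : Fin (m + 1) => L) L)
    (x : Fin (m + 1) → L) (k : Fin (m + 1)) (c : ℤ) (v : L) :
    f (Function.update x k (c • v)) = c • f (Function.update x k v) := by
  have h : (c • v) = ((c : K)) • v := (Int.cast_smul_eq_zsmul K c v).symm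
  rw [h, f.map_update_smul, Int.cast_smul_eq_zsmul]

lemma bracket_pairCons_zi (alg : LAnKe K (m + 1) L) (z0 : L) (z : Fin m → L) (i : Fin m) :
    alg.bracket (pairCons (z i) z0 z i)
      = ((-1 : ℤ) ^ ((i : ℕ) + 1)) • alg.bracket (consTup z0 z) := by
  have hcomp : (pairCons (n := m + 1) (z i) z0 z i) ∘ (Fin.cycleRange i.succ)
      = consTup z0 z := by
    funext x
    simp only [Function.comp_apply]
    have hv := cycleRange_val (i.succ : Fin (m + 1)) x
    rw [Fin.val_succ] at hv
    rcases Nat.lt_trichotomy (x : ℕ) ((i : ℕ) + 1) with h | h | h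
    · rw [if_pos h] at hv
      rcases Nat.eq_zero_or_pos (x : ℕ) with h0 | h0
      · rw [pairCons_eval_one _ _ _ _ _ (by omega), consTup_eval_zero _ _ _ h0]
      · rw [pairCons_eval_lt _ _ _ _ _ (by omega) (by omega),
          consTup_eval_pos _ _ _ h0]
        exact congrArg z (Fin.ext (by simp; omega))
    · rw [if_neg (by omega), if_pos h] at hv
      rw [pairCons_eval_zero _ _ _ _ _ hv, consTup_eval_pos _ _ _ (by omega)]
      exact congrArg z (Fin.ext (by simp; omega))
    · rw [if_neg (by omega), if_neg (by omega)] at hv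
      have hi := i.isLt
      rw [pairCons_eval_ge _ _ _ _ _ (by omega) (by omega),
        consTup_eval_pos _ _ _ (by omega)]
      exact congrArg z (Fin.ext (by simp; omega))
  have h1 := skew_eq alg _ hcomp
  rwa [sign_cycleRange_succ] at h1

lemma bracket_consTup_wj (hm : 1 ≤ m) (alg : LAnKe K (m + 1) L) (z0 : L)
    (z : Fin m → L) (i : Fin m) (b : L) :
    alg.bracket (consTup b (midTup z0 z i))
      = (-1 : ℤ) • alg.bracket (pairCons z0 b z i) := by
  have hone : ((1 : Fin (m + 1)) : ℕ) = 1 := by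
    rw [Fin.val_one']; exact Nat.mod_eq_of_lt (by omega)
  have h01 : (0 : Fin (m + 1)) ≠ 1 := by
    intro h
    have := congrArg Fin.val h
    rw [hone] at this
    simp at this
  have hcomp : (consTup (n := m + 1) b (midTup z0 z i)) ∘ (Equiv.swap 0 1)
      = pairCons (n := m + 1) z0 b z i := by
    funext x
    simp only [Function.comp_apply]
    by_cases hx0 : x = 0
    · subst hx0
      rw [Equiv.swap_apply_left, consTup_eval_pos _ _ _ (by rw [hone]; omega)]
      rw [midTup_eval_zero _ _ _ _
        (by show ((1 : Fin (m + 1)) : ℕ) - 1 = 0; rw [hone])]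
      rw [pairCons_eval_zero _ _ _ _ _ (by simp)]
    · by_cases hx1 : x = 1
      · subst hx1
        rw [Equiv.swap_apply_right, consTup_eval_zero _ _ _ (by simp)]
        rw [pairCons_eval_one _ _ _ _ _ hone]
      · rw [Equiv.swap_apply_of_ne_of_ne hx0 hx1]
        have hx0' : (x : ℕ) ≠ 0 := fun h => hx0 (Fin.ext (by simpa using h))
        have hx1' : (x : ℕ) ≠ 1 := by
          intro h
          exact hx1 (Fin.ext (by rw [hone]; exact h))
        rw [consTup_eval_pos _ _ _ (by omega)]
        by_cases hlt : (x : ℕ) - 2 < (i : ℕ)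
        · rw [midTup_eval_lt _ _ _ _ (by simp; omega) (by simp; omega),
            pairCons_eval_lt _ _ _ _ _ (by omega) hlt]
          exact congrArg z (Fin.ext (by simp; omega))
        · rw [midTup_eval_ge _ _ _ _ (by simp; omega) (by simp; omega),
            pairCons_eval_ge _ _ _ _ _ (by omega) (by omega)]
  have h1 := skew_eq alg _ hcomp
  rwa [Equiv.Perm.sign_swap h01] at h1

lemma bracket_update_succ (alg : LAnKe K (m + 1) L) (a : L) (w : Fin m → L)
    (j : Fin m) (C : L) :
    alg.bracket (Function.update (consTup (n := m + 1) a w) j.succ C)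
      = ((-1 : ℤ) ^ ((j : ℕ) + 1)) • alg.bracket (pairCons C a w j) := by
  have hcomp : (pairCons (n := m + 1) C a w j) ∘ (Fin.cycleRange j.succ)
      = Function.update (consTup a w) j.succ C := by
    funext x
    simp only [Function.comp_apply]
    have hv := cycleRange_val (j.succ : Fin (m + 1)) x
    rw [Fin.val_succ] at hv
    rw [Function.update_apply]
    by_cases hxe : x = j.succ
    · subst hxe
      rw [if_pos rfl]
      rw [if_neg (by simp), if_pos (by simp)] at hv
      rw [pairCons_eval_zero _ _ _ _ _ hv]
    · have hxne : (x : ℕ) ≠ (j : ℕ) + 1 := by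
        intro h
        exact hxe (Fin.ext (by simpa [Fin.val_succ] using h))
      rw [if_neg hxe]
      rcases Nat.lt_trichotomy (x : ℕ) ((j : ℕ) + 1) with h | h | h
      · rw [if_pos h] at hv
        rcases Nat.eq_zero_or_pos (x : ℕ) with h0 | h0
        · rw [pairCons_eval_one _ _ _ _ _ (by omega), consTup_eval_zero _ _ _ h0]
        · rw [pairCons_eval_lt _ _ _ _ _ (by omega) (by omega),
            consTup_eval_pos _ _ _ h0]
          exact congrArg w (Fin.ext (by simp; omega))
      · exact absurd h hxne
      · rw [if_neg (by omega), if_neg (by omega)] at hv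
        have hj := j.isLt
        rw [pairCons_eval_ge _ _ _ _ _ (by omega) (by omega),
          consTup_eval_pos _ _ _ (by omega)]
        exact congrArg w (Fin.ext (by simp; omega))
  have h1 := skew_eq alg _ hcomp
  rw [sign_cycleRange_succ] at h1
  rw [h1, smul_smul, ← pow_add]
  have he : (-1 : ℤ) ^ (((j : ℕ) + 1) + ((j : ℕ) + 1)) = 1 :=
    Even.neg_one_pow ⟨(j : ℕ) + 1, rfl⟩
  rw [he, one_smul]

lemma key (hm : 1 ≤ m) (alg : LAnKe K (m + 1) L) (z0 : L) (z w : Fin m → L)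
    (i : Fin m) :
    alg.bracket (pairCons (alg.bracket (consTup (z i) w)) z0 z i)
      = ((-1 : ℤ) ^ ((i : ℕ) + 1)) •
            alg.bracket (consTup (alg.bracket (consTup z0 z)) w)
        + ∑ j : Fin m, ((-1 : ℤ) ^ (((j : ℕ) + 1) + 1)) •
            alg.bracket (pairCons (alg.bracket (pairCons z0 (w j) z i)) (z i) w j) := by
  have hJ := alg.jacobi (consTup (z i) w) (midTup z0 z i)
  rw [consTup_midTup] at hJ
  rw [Fin.sum_univ_succ] at hJ
  rw [hJ]
  congr 1
  · rw [consTup_eval_zero (z i) w 0 (by simp)]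
    rw [consTup_midTup]
    rw [bracket_pairCons_zi]
    rw [map_update_zsmul]
    rw [update_consTup_zero]
  · apply Finset.sum_congr rfl
    intro j _
    rw [consTup_succ (z i) w j]
    rw [bracket_consTup_wj hm]
    rw [map_update_zsmul]
    rw [bracket_update_succ]
    rw [smul_smul]
    congr 1
    ring

end BracketLemmas

/-- in a LAnKe,
`Σ_{i=1}^{n-1} (-1)^i [[z_i,w_1,…,w_{n-1}], z_0, z_1,…,ẑ_i,…,z_{n-1}]
  = (n-1)·[[z_0,z_1,…,z_{n-1}], w_1,…,w_{n-1}]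
    + Σ_{i=1}^{n-1} (-1)^i Σ_{j=1}^{n-1} (-1)^{j+1}
        [[z_0,w_j,z_1,…,ẑ_i,…,z_{n-1}], z_i, w_1,…,ŵ_j,…,w_{n-1}]`,
where `n-1` acts via the canonical map `ℤ → K`. Here `z i : L` for `i : Fin (n-1)` is
the paper's `z_{i+1}` (so the paper's sign `(-1)^i` is `(-1)^{(i:ℕ)+1}`), likewise for `w`. -/


theorem lanke_sum_exchange
    (K : Type*) [Field K] [CharZero K] (n : ℕ) (hn : 2 ≤ n)
    (L : Type*) [AddCommGroup L] [Module K L] (alg : LAnKe K n L)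
    (z0 : L) (z w : Fin (n - 1) → L) :
    ∑ i : Fin (n - 1), ((-1 : ℤ) ^ ((i : ℕ) + 1)) •
        alg.bracket (pairCons (alg.bracket (consTup (z i) w)) z0 z i) =
      (((n : ℤ) - 1 : ℤ) : K) •
          alg.bracket (consTup (alg.bracket (consTup z0 z)) w) +
        ∑ i : Fin (n - 1), ∑ j : Fin (n - 1),
          ((-1 : ℤ) ^ ((i : ℕ) + 1) * (-1 : ℤ) ^ (((j : ℕ) + 1) + 1)) •
            alg.bracket
              (pairCons (alg.bracket (pairCons z0 (w j) z i)) (z i) w j) := by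
  obtain ⟨m, rfl⟩ : ∃ m, n = m + 1 := ⟨n - 1, by omega⟩
  have hm : 1 ≤ m := by omega
  have H :
      ∑ i : Fin m, ((-1 : ℤ) ^ ((i : ℕ) + 1)) •
          alg.bracket (pairCons (alg.bracket (consTup (z i) w)) z0 z i) =
        ((((m + 1 : ℕ) : ℤ) - 1 : ℤ) : K) •
            alg.bracket (consTup (alg.bracket (consTup z0 z)) w) +
          ∑ i : Fin m, ∑ j : Fin m,
            ((-1 : ℤ) ^ ((i : ℕ) + 1) * (-1 : ℤ) ^ (((j : ℕ) + 1) + 1)) •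
              alg.bracket
                (pairCons (alg.bracket (pairCons z0 (w j) z i)) (z i) w j) := by
    have hsum : ∀ i : Fin m,
        ((-1 : ℤ) ^ ((i : ℕ) + 1)) •
            alg.bracket (pairCons (alg.bracket (consTup (z i) w)) z0 z i)
          = alg.bracket (consTup (alg.bracket (consTup z0 z)) w)
            + ∑ j : Fin m,
                ((-1 : ℤ) ^ ((i : ℕ) + 1) * (-1 : ℤ) ^ (((j : ℕ) + 1) + 1)) •
                  alg.bracket
                    (pairCons (alg.bracket (pairCons z0 (w j) z i)) (z i) w j) := by
      intro i
      rw [key hm alg z0 z w i, smul_add, smul_smul, ← pow_add]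
      congr 1
      · rw [Even.neg_one_pow ⟨(i : ℕ) + 1, rfl⟩, one_smul]
      · rw [Finset.smul_sum]
        exact Finset.sum_congr rfl fun j _ => by rw [smul_smul]
    rw [Finset.sum_congr rfl fun i _ => hsum i]
    rw [Finset.sum_add_distrib]
    congr 1
    rw [Finset.sum_const, Finset.card_univ, Fintype.card_fin]
    have hc : ((((m + 1 : ℕ) : ℤ) - 1 : ℤ) : K) • alg.bracket (consTup (alg.bracket (consTup z0 z)) w)
        = m • alg.bracket (consTup (alg.bracket (consTup z0 z)) w) := by
      have : (((m + 1 : ℕ) : ℤ) - 1 : ℤ) = (m : ℤ) := by push_cast; ring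
      rw [this, Int.cast_smul_eq_zsmul, natCast_zsmul]
    rw [hc]
  exact H
end

section
/- Let K be a field of characteristic zero, let n ≥ 2, and let L be a LAnKe over K. For u ∈ L, r ≥ 0, and elements y_{t,1},…,y_{t,n-1} ∈ L (1 ≤ t ≤ r), let C(u) denote the iterated bracket [[⋯[[u,y_{1,1},…,y_{1,n-1}],y_{2,1},…,y_{2,n-1}],⋯],y_{r,1},…,y_{r,n-1}] obtained by successively bracketing u with y_{1,*}, then y_{2,*}, …, then y_{r,*}. Then for all z_0, z_1,…,z_{n-1}, w_1,…,w_{n-1} ∈ L one has (n−2)·C([[z_0,z_1,…,z_{n-1}],w_1,…,w_{n-1}]) + C([[z_0,w_1,…,w_{n-1}],z_1,…,z_{n-1}]) + Σ_{i=1}^{n-1} (−1)^i Σ_{j=1}^{n-1} (−1)^{j+1} C([[z_0,w_j,z_1,…,ẑ_i,…,z_{n-1}],z_i,w_1,…,ŵ_j,…,w_{n-1}]) = 0, where the integer coefficient n−2 acts via the canonical map ℤ → K. -/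
/-- The comb `C(u) = [[⋯[[u, y_{1,1},…,y_{1,n-1}], y_{2,1},…,y_{2,n-1}], ⋯], y_{r,1},…,y_{r,n-1}]`
obtained by successively bracketing `u` with the rows `y 0, y 1, …, y (r-1)`. -/
def LAnKe.comb {K : Type*} [Field K] {n : ℕ} {L : Type*} [AddCommGroup L] [Module K L]
    (alg : LAnKe K n L) : (r : ℕ) → (Fin r → Fin (n - 1) → L) → L → L
  | 0, _, u => u
  | r + 1, y, u =>
      alg.bracket (consTup (alg.comb r (fun t => y t.castSucc) u) (y (Fin.last r)))

section aux
variable {L : Type*} {p : ℕ}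

lemma consTup_eq {q : ℕ} (a : L) (v : Fin q → L) :
    (consTup a v : Fin (q + 1) → L) = Fin.cons a v := by
  funext m
  refine Fin.cases ?_ (fun i => ?_) m
  · simp [consTup]
  · simp only [consTup, Fin.cons_succ, Fin.val_succ]
    rw [dif_neg (by omega)]
    congr 1

lemma cons_eval {q : ℕ} (a : L) (v : Fin q → L) (m : Fin (q + 1)) (hm : (m : ℕ) ≠ 0) :
    (Fin.cons a v : Fin (q + 1) → L) m = v ⟨(m : ℕ) - 1, by have := m.isLt; omega⟩ := by
  rw [← consTup_eq]
  simp only [consTup, dif_neg hm]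

lemma cons_eval0 {q : ℕ} (a : L) (v : Fin q → L) (m : Fin (q + 1)) (hm : (m : ℕ) = 0) :
    (Fin.cons a v : Fin (q + 1) → L) m = a := by
  rw [← consTup_eq]
  simp only [consTup, dif_pos hm]

lemma removeNth_eval {q : ℕ} (i : Fin (q + 1)) (z : Fin (q + 1) → L) (k : Fin q) :
    i.removeNth z k
      = if (k : ℕ) < (i : ℕ) then z ⟨(k : ℕ), by omega⟩
        else z ⟨(k : ℕ) + 1, by omega⟩ := by
  unfold Fin.removeNth
  rcases lt_or_ge (k : ℕ) (i : ℕ) with h | h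
  · rw [if_pos h, Fin.succAbove_of_castSucc_lt _ _ (by rw [Fin.lt_def]; simpa using h)]
    exact congrArg z (Fin.ext (by simp))
  · rw [if_neg (by omega), Fin.succAbove_of_le_castSucc _ _ (by rw [Fin.le_def]; simpa using h)]
    exact congrArg z (Fin.ext (by simp))

lemma removeNth_eval' {q : ℕ} (i : Fin (q + 1)) (z : Fin (q + 1) → L) (t : ℕ) (ht : t < q) :
    i.removeNth z ⟨t, ht⟩
      = if t < (i : ℕ) then z ⟨t, by omega⟩ else z ⟨t + 1, by omega⟩ := by
  rw [removeNth_eval]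

lemma pairCons_eq (a b : L) (v : Fin (p + 1) → L) (i : Fin (p + 1)) :
    (pairCons a b v i : Fin (p + 2) → L) = Fin.cons a (Fin.cons b (i.removeNth v)) := by
  funext m
  refine Fin.cases ?_ (fun j => ?_) m
  · simp [pairCons]
  · refine Fin.cases ?_ (fun k => ?_) j
    · simp [pairCons]
    · simp only [pairCons, Fin.cons_succ, Fin.val_succ]
      rw [dif_neg (by omega), dif_neg (by omega), removeNth_eval]
      rcases lt_or_ge ((k : ℕ)) ((i : ℕ)) with h | h
      · rw [if_pos (by omega), if_pos h]
        exact congrArg v (Fin.ext (by simp only [Fin.val_mk]; omega))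
      · rw [if_neg (by omega), if_neg (by omega)]
        exact congrArg v (Fin.ext (by simp only [Fin.val_mk]; omega))

lemma keyPerm (u z0 : L) (z : Fin (p + 1) → L) (i : Fin (p + 1)) :
    (Fin.cons u (Fin.cons z0 (i.removeNth z)) : Fin (p + 2) → L) ∘ (Fin.cycleRange i.succ)
      = Fin.cons z0 (Function.update z i u) := by
  funext m
  simp only [Function.comp_apply]
  have hσ : ((i.succ.cycleRange m : Fin (p + 2)) : ℕ)
      = if (m : ℕ) < (i : ℕ) + 1 then (m : ℕ) + 1
        else if (m : ℕ) = (i : ℕ) + 1 then 0 else (m : ℕ) := by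
    rcases Nat.lt_trichotomy (m : ℕ) ((i : ℕ) + 1) with h | h | h
    · rw [if_pos h, Fin.coe_cycleRange_of_lt (by rw [Fin.lt_def]; simpa using h)]
    · rw [if_neg (by omega), if_pos h,
        Fin.cycleRange_of_eq (Fin.ext (by simpa using h))]
      simp
    · rw [if_neg (by omega), if_neg (by omega),
        Fin.cycleRange_of_gt (by rw [Fin.lt_def]; simpa using h)]
  set s := i.succ.cycleRange m with hs
  rcases Nat.lt_trichotomy (m : ℕ) ((i : ℕ) + 1) with h | h | h
  · rw [if_pos h] at hσ
    rcases Nat.eq_zero_or_pos (m : ℕ) with h0 | h0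
    · rw [cons_eval0 _ _ m h0, cons_eval _ _ s (by omega),
        cons_eval0 _ _ _ (by simp [hσ, h0])]
    · rw [cons_eval _ _ m (by omega), cons_eval _ _ s (by omega),
        cons_eval _ _ ⟨(s : ℕ) - 1, by have := s.isLt; omega⟩ (by simp only [Fin.val_mk]; omega)]
      have hidx : (⟨((⟨(s : ℕ) - 1, by have := s.isLt; omega⟩ : Fin (p + 1)) : ℕ) - 1,
          by have := s.isLt; omega⟩ : Fin p) = ⟨(m : ℕ) - 1, by have := m.isLt; omega⟩ :=
        Fin.ext (by simp [hσ] <;> omega)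
      rw [hidx, removeNth_eval', if_pos (by omega),
        Function.update_of_ne (by simp only [ne_eq, Fin.ext_iff, Fin.val_mk]; omega)]
  · rw [if_neg (by omega), if_pos h] at hσ
    rw [cons_eval0 _ _ s hσ, cons_eval _ _ m (by omega)]
    have hidx : (⟨(m : ℕ) - 1, by have := m.isLt; omega⟩ : Fin (p + 1)) = i :=
      Fin.ext (by simp only [Fin.val_mk]; omega)
    rw [hidx, Function.update_self]
  · rw [if_neg (by omega), if_neg (by omega)] at hσ
    rw [cons_eval _ _ m (by omega), cons_eval _ _ s (by omega),
      cons_eval _ _ ⟨(s : ℕ) - 1, by have := s.isLt; omega⟩ (by simp only [Fin.val_mk]; omega)]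
    have hidx : (⟨((⟨(s : ℕ) - 1, by have := s.isLt; omega⟩ : Fin (p + 1)) : ℕ) - 1,
        by have := s.isLt; omega⟩ : Fin p) = ⟨(m : ℕ) - 2, by have := m.isLt; omega⟩ :=
      Fin.ext (by simp [hσ] <;> omega)
    rw [hidx, removeNth_eval', if_neg (by omega),
      Function.update_of_ne (by simp only [ne_eq, Fin.ext_iff, Fin.val_mk]; omega)]
    exact congrArg z (Fin.ext (by simp only [Fin.val_mk]; omega))
end aux

section algebra
variable {K : Type*} [Field K] {L : Type*} [AddCommGroup L] [Module K L] {p : ℕ}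

lemma flip_zsmul {k : ℕ} {x y : L} (h : x = ((-1 : ℤ) ^ k) • y) :
    y = ((-1 : ℤ) ^ k) • x := by
  rw [h, smul_smul, ← pow_add, Even.neg_one_pow ⟨k, rfl⟩, one_smul]

variable (alg : LAnKe K (p + 2) L)

/-- The bracket as a linear map in the `0`-th slot of a `Fin.cons`. -/
def slot0 (t : Fin (p + 1) → L) : L →ₗ[K] L where
  toFun u := alg.bracket (Fin.cons u t)
  map_add' x y := by
    simpa [Fin.update_cons_zero] using alg.bracket.map_update_add (Fin.cons x t) 0 x y
  map_smul' c x := by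
    simpa [Fin.update_cons_zero] using alg.bracket.map_update_smul (Fin.cons x t) 0 c x

@[simp] lemma slot0_apply (t : Fin (p + 1) → L) (u : L) :
    slot0 alg t u = alg.bracket (Fin.cons u t) := rfl

/-- The bracket as a linear map in slot `k` of a given tuple. -/
def updLin (m : Fin (p + 2) → L) (k : Fin (p + 2)) : L →ₗ[K] L where
  toFun x := alg.bracket (Function.update m k x)
  map_add' x y := alg.bracket.map_update_add m k x y
  map_smul' c x := alg.bracket.map_update_smul m k c x

@[simp] lemma updLin_apply (m : Fin (p + 2) → L) (k : Fin (p + 2)) (x : L) :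
    updLin alg m k x = alg.bracket (Function.update m k x) := rfl

lemma jacobi' (x : Fin (p + 2) → L) (y : Fin (p + 1) → L) :
    alg.bracket (Fin.cons (alg.bracket x) y) =
      ∑ k : Fin (p + 2),
        alg.bracket (Function.update x k (alg.bracket (Fin.cons (x k) y))) := by
  simpa [consTup_eq] using alg.jacobi x y

lemma br_cons_update (u z0 : L) (z : Fin (p + 1) → L) (i : Fin (p + 1)) :
    alg.bracket (Fin.cons z0 (Function.update z i u))
      = ((-1 : ℤ) ^ ((i : ℕ) + 1)) •
          alg.bracket (Fin.cons u (Fin.cons z0 (i.removeNth z))) := by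
  have h := alg.skew (Fin.cons u (Fin.cons z0 (i.removeNth z))) (Fin.cycleRange i.succ)
  rw [keyPerm, Fin.sign_cycleRange] at h
  simp only [Units.val_pow_eq_pow_val, Units.val_neg, Units.val_one, Fin.val_succ] at h
  exact flip_zsmul h

lemma br_swap (a b : L) (t : Fin p → L) :
    alg.bracket (Fin.cons a (Fin.cons b t))
      = - alg.bracket (Fin.cons b (Fin.cons a t)) := by
  have hc : (Fin.cons a (Fin.cons b t) : Fin (p + 2) → L) ∘ (Equiv.swap 0 1)
      = Fin.cons b (Fin.cons a t) := by
    funext m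
    simp only [Function.comp_apply]
    by_cases h0 : m = 0
    · subst h0
      rw [Equiv.swap_apply_left, cons_eval _ _ 1 (by simp), cons_eval0 _ _ 0 rfl,
        cons_eval0 _ _ _ (by simp)]
    · by_cases h1 : m = 1
      · subst h1
        rw [Equiv.swap_apply_right, cons_eval0 _ _ 0 rfl, cons_eval _ _ 1 (by simp),
          cons_eval0 _ _ _ (by simp)]
      · rw [Equiv.swap_apply_of_ne_of_ne h0 h1]
        have hm0 : (m : ℕ) ≠ 0 := fun h => h0 (Fin.ext (by simpa using h))
        have hm1 : (m : ℕ) ≠ 1 := fun h => h1 (Fin.ext (by simpa using h))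
        rw [cons_eval _ _ m hm0, cons_eval _ _ m hm0,
          cons_eval _ _ _ (by simp only [Fin.val_mk]; omega),
          cons_eval _ _ _ (by simp only [Fin.val_mk]; omega)]
  have h := alg.skew (Fin.cons a (Fin.cons b t)) (Equiv.swap 0 1)
  rw [hc, Equiv.Perm.sign_swap (by simp [Fin.ext_iff])] at h
  simpa using h
end algebra

section core
variable {K : Type*} [Field K] {L : Type*} [AddCommGroup L] [Module K L] {p : ℕ}
variable (alg : LAnKe K (p + 2) L)

lemma element_id (z0 : L) (z w : Fin (p + 1) → L) :
    (p : ℤ) • alg.bracket (Fin.cons (alg.bracket (Fin.cons z0 z)) w)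
      + alg.bracket (Fin.cons (alg.bracket (Fin.cons z0 w)) z)
      + ∑ i : Fin (p + 1), ∑ j : Fin (p + 1),
          ((-1 : ℤ) ^ ((i : ℕ) + 1) * (-1 : ℤ) ^ (((j : ℕ) + 1) + 1)) •
            alg.bracket
              (Fin.cons (alg.bracket (Fin.cons z0 (Fin.cons (w j) (i.removeNth z))))
                (Fin.cons (z i) (j.removeNth w))) = 0 := by
  set A := alg.bracket (Fin.cons z0 z) with hA
  set C := alg.bracket (Fin.cons A w) with hC
  set D : Fin (p + 1) → Fin (p + 1) → L := fun i j =>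
    alg.bracket (Fin.cons (alg.bracket (Fin.cons z0 (Fin.cons (w j) (i.removeNth z))))
      (Fin.cons (z i) (j.removeNth w))) with hD
  -- the first bracket of `z i` with the `z0,ẑ` tuple, rewritten via skew symmetry
  have h4 : ∀ i : Fin (p + 1),
      alg.bracket (Fin.cons (z i) (Fin.cons z0 (i.removeNth z)))
        = ((-1 : ℤ) ^ ((i : ℕ) + 1)) • A := by
    intro i
    have e := br_cons_update alg (z i) z0 z i
    rw [Function.update_eq_self] at e
    exact flip_zsmul e
  -- the comb of each `T_i`
  have hT : ∀ i : Fin (p + 1),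
      alg.bracket (Fin.cons z0 (Function.update z i
          (alg.bracket (Fin.cons (z i) w))))
        = C + ∑ j : Fin (p + 1),
            ((-1 : ℤ) ^ ((i : ℕ) + 1) * (-1 : ℤ) ^ (((j : ℕ) + 1) + 1)) • D i j := by
    intro i
    rw [br_cons_update alg _ z0 z i,
      jacobi' alg (Fin.cons (z i) w) (Fin.cons z0 (i.removeNth z)),
      Fin.sum_univ_succ]
    simp only [Fin.cons_zero, Fin.cons_succ]
    -- the k = 0 term
    have h0 : alg.bracket (Function.update (Fin.cons (z i) w) 0
        (alg.bracket (Fin.cons (z i) (Fin.cons z0 (i.removeNth z)))))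
          = ((-1 : ℤ) ^ ((i : ℕ) + 1)) • C := by
      rw [h4 i, ← updLin_apply, map_zsmul, updLin_apply, Fin.update_cons_zero, ← hC]
    -- the k = j.succ terms
    have hj : ∀ j : Fin (p + 1),
        alg.bracket (Function.update (Fin.cons (z i) w) j.succ
          (alg.bracket (Fin.cons (w j) (Fin.cons z0 (i.removeNth z)))))
            = - (((-1 : ℤ) ^ ((j : ℕ) + 1)) • D i j) := by
      intro j
      rw [br_swap alg (w j) z0 (i.removeNth z), ← updLin_apply, map_neg, updLin_apply,
        ← Fin.cons_update, br_cons_update alg _ (z i) w j, hD]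
    rw [h0]
    rw [Finset.sum_congr rfl (fun j _ => hj j)]
    rw [smul_add, smul_smul, ← pow_add, Even.neg_one_pow ⟨(i : ℕ) + 1, rfl⟩, one_smul,
      Finset.smul_sum]
    congr 1
    refine Finset.sum_congr rfl (fun j _ => ?_)
    rw [smul_neg, smul_smul]
    rw [show -(((-1 : ℤ) ^ ((i : ℕ) + 1) * (-1 : ℤ) ^ ((j : ℕ) + 1)) • D i j)
        = ((-1 : ℤ) ^ ((i : ℕ) + 1) * -(-1 : ℤ) ^ ((j : ℕ) + 1)) • D i j by
      rw [← neg_smul]; ring_nf]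
    congr 1
    ring
  -- the main Jacobi expansion
  have hJ := jacobi' alg (Fin.cons z0 z) w
  rw [Fin.sum_univ_succ] at hJ
  simp only [Fin.cons_zero, Fin.cons_succ, Fin.update_cons_zero, ← Fin.cons_update] at hJ
  rw [Finset.sum_congr rfl (fun i _ => hT i)] at hJ
  rw [Finset.sum_add_distrib, Finset.sum_const, Finset.card_univ, Fintype.card_fin] at hJ
  -- hJ : C = F + ((p+1) • C + S)
  have hsplit : ((p : ℕ) + 1) • C = C + (p : ℤ) • C := by
    rw [add_nsmul, one_nsmul, natCast_zsmul, add_comm]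
  rw [hsplit] at hJ
  have e : alg.bracket (Fin.cons (alg.bracket (Fin.cons z0 z)) w) = C := rfl
  rw [e] at hJ
  have key : ∀ F S : L, C = F + (C + (p : ℤ) • C + S) → (p : ℤ) • C + F + S = 0 := by
    intro F S h
    calc (p : ℤ) • C + F + S = (F + (C + (p : ℤ) • C + S)) - C := by abel
      _ = C - C := by rw [← h]
      _ = 0 := sub_self C
  simp only [hD] at hJ
  exact key _ _ hJ
end core

section final
variable {K : Type*} [Field K] {L : Type*} [AddCommGroup L] [Module K L] {p : ℕ}

/-- The comb as a linear map. -/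
def combLin (alg : LAnKe K (p + 2) L) :
    (r : ℕ) → (Fin r → Fin (p + 1) → L) → (L →ₗ[K] L)
  | 0, _ => LinearMap.id
  | r + 1, y =>
      (slot0 alg (y (Fin.last r))).comp (combLin alg r (fun t => y t.castSucc))

lemma comb_eq (alg : LAnKe K (p + 2) L) (r : ℕ) (y : Fin r → Fin (p + 1) → L)
    (u : L) : alg.comb r y u = combLin alg r y u := by
  induction r with
  | zero => rfl
  | succ r ih =>
      show alg.bracket (consTup (alg.comb r _ u) (y (Fin.last r))) = _
      rw [consTup_eq, ih]
      rfl
end final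

/-- in a LAnKe, for any comb `C` of `r` brackets,
`(n-2)·C([[z_0,z_1,…,z_{n-1}], w_1,…,w_{n-1}]) + C([[z_0,w_1,…,w_{n-1}], z_1,…,z_{n-1}])
   + Σ_{i=1}^{n-1} (-1)^i Σ_{j=1}^{n-1} (-1)^{j+1}
       C([[z_0,w_j,z_1,…,ẑ_i,…,z_{n-1}], z_i, w_1,…,ŵ_j,…,w_{n-1}]) = 0`,
where `n-2` acts via the canonical map `ℤ → K`. Here `z i : L` for `i : Fin (n-1)` is
the paper's `z_{i+1}` (so the paper's sign `(-1)^i` is `(-1)^{(i:ℕ)+1}`), likewise for `w`. -/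
theorem lanke_comb_relation
    (K : Type*) [Field K] [CharZero K] (n : ℕ) (hn : 2 ≤ n)
    (L : Type*) [AddCommGroup L] [Module K L] (alg : LAnKe K n L)
    (r : ℕ) (y : Fin r → Fin (n - 1) → L)
    (z0 : L) (z w : Fin (n - 1) → L) :
    (((n : ℤ) - 2 : ℤ) : K) •
        alg.comb r y (alg.bracket (consTup (alg.bracket (consTup z0 z)) w)) +
      alg.comb r y (alg.bracket (consTup (alg.bracket (consTup z0 w)) z)) +
      ∑ i : Fin (n - 1), ∑ j : Fin (n - 1),
        ((-1 : ℤ) ^ ((i : ℕ) + 1) * (-1 : ℤ) ^ (((j : ℕ) + 1) + 1)) •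
          alg.comb r y
            (alg.bracket
              (pairCons (alg.bracket (pairCons z0 (w j) z i)) (z i) w j)) = 0 := by
  obtain ⟨p, rfl⟩ : ∃ p, n = p + 2 := ⟨n - 2, by omega⟩
  have hcoef : (((p + 2 : ℕ) : ℤ) - 2 : ℤ) = (p : ℤ) := by push_cast; ring
  rw [Int.cast_smul_eq_zsmul, hcoef]
  simp only [comb_eq, consTup_eq, pairCons_eq]
  set f := combLin alg r y with hf
  have hsum : ∀ G : Fin (p + 2 - 1) → Fin (p + 2 - 1) → L,
      (∑ i : Fin (p + 2 - 1), ∑ j : Fin (p + 2 - 1),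
        ((-1 : ℤ) ^ ((i : ℕ) + 1) * (-1 : ℤ) ^ (((j : ℕ) + 1) + 1)) • f (G i j))
      = f (∑ i : Fin (p + 2 - 1), ∑ j : Fin (p + 2 - 1),
        ((-1 : ℤ) ^ ((i : ℕ) + 1) * (-1 : ℤ) ^ (((j : ℕ) + 1) + 1)) • (G i j)) := by
    intro G
    rw [map_sum]
    refine Finset.sum_congr rfl (fun i _ => ?_)
    rw [map_sum]
    exact Finset.sum_congr rfl (fun j _ => (map_zsmul f _ _).symm)
  rw [hsum, ← map_zsmul f, ← map_add, ← map_add,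
    show (0 : L) = f 0 from (map_zero f).symm]
  congr 1
  exact element_id alg z0 z w
end
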